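/- Let A = ((a_n, r_n))_{n≥0} be an abstract Swiss cheese with δ₁(A) > 0. Then there exists a classical abstract Swiss cheese B such that X_B ⊆ X_A and δ₁(B) ≥ δ₁(A). (Feinstein–Heath classicalisation theorem.) -/

import Mathlib

open Metric Set Filter Topology ENNReal

noncomputable section

/-- Abstract Swiss cheese space `F = (ℂ × [0,∞))^{ℕ₀}` with the product topology. -/
abbrev ASC := ℕ → ℂ × NNReal

/-- The centre of the `n`-th disk. -/
def ctr (A : ASC) (n : ℕ) : ℂ := (A n).1

/-- The radius of the `n`-th disk, as a real number. -/
def rad (A : ASC) (n : ℕ) : ℝ := ((A n).2 : ℝ)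

/-- The associated Swiss cheese set `X_A`. -/
def Xset (A : ASC) : Set ℂ :=
  closedBall (ctr A 0) (rad A 0) \ ⋃ n : ℕ, ball (ctr A (n + 1)) (rad A (n + 1))

/-- The significant index set `S_A = {n ≥ 1 : r_n > 0}`. -/
def SIdx (A : ASC) : Set ℕ := {n | 1 ≤ n ∧ 0 < rad A n}

/-- The radius sum function `ρ(A) = ∑_{n≥1} r_n`, valued in `[0,∞]`. -/
def rhoSum (A : ASC) : ℝ≥0∞ := ∑' n : ℕ, ((A (n + 1)).2 : ℝ≥0∞)

/-- The centre bound function `μ(A) = sup_{n≥1} |a_n|`, valued in `[0,∞]`. -/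
def muSup (A : ASC) : ℝ≥0∞ := ⨆ n : ℕ, (‖(A (n + 1)).1‖₊ : ℝ≥0∞)

/-- `H_A(E) = {n ∈ S_A : B̄(a_n, r_n) ∩ E ≠ ∅}`. -/
def HIdx (A : ASC) (E : Set ℂ) : Set ℕ :=
  {n | n ∈ SIdx A ∧ (closedBall (ctr A n) (rad A n) ∩ E).Nonempty}

/-- The local radius sum function `ρ_E(A) = ∑_{n ∈ H_A(E)} r_n`. -/
def rhoLoc (A : ASC) (E : Set ℂ) : ℝ≥0∞ :=
  ∑' n : HIdx A E, ((A (n : ℕ)).2 : ℝ≥0∞)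

/-- The discrepancy function of order 1, `δ₁(A) = r_0 − ∑_{n≥1} r_n ∈ [−∞,∞)`. -/
def delta1 (A : ASC) : EReal := (rad A 0 : EReal) - ((rhoSum A : ℝ≥0∞) : EReal)

/-- The discrepancy function of order `α`, `δ_α(A) = r_0^α − ∑_{n≥1} r_n^α ∈ [−∞,∞)`. -/
def deltaAlpha (α : ℝ) (A : ASC) : EReal :=
  ((((A 0).2 : ℝ≥0∞) ^ α : ℝ≥0∞) : EReal) -
    ((∑' n : ℕ, ((A (n + 1)).2 : ℝ≥0∞) ^ α : ℝ≥0∞) : EReal)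

/-- The discrepancy function of order 2. -/
def delta2 (A : ASC) : EReal := deltaAlpha 2 A

/-- `A` is classical. -/
def IsClassicalASC (A : ASC) : Prop :=
  rhoSum A < ⊤ ∧ 0 < rad A 0 ∧
  ∀ k ∈ SIdx A,
    closedBall (ctr A k) (rad A k) ⊆ ball (ctr A 0) (rad A 0) ∧
    ∀ l ∈ SIdx A, l ≠ k →
      closedBall (ctr A k) (rad A k) ∩ closedBall (ctr A l) (rad A l) = ∅

/-- `A` is semiclassical. -/
def IsSemiclassicalASC (A : ASC) : Prop :=
  rhoSum A < ⊤ ∧ 0 < rad A 0 ∧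
  ∀ k ∈ SIdx A,
    ball (ctr A k) (rad A k) ⊆ ball (ctr A 0) (rad A 0) ∧
    ∀ l ∈ SIdx A, l ≠ k →
      ball (ctr A k) (rad A k) ∩ ball (ctr A l) (rad A l) = ∅

/-- Membership in `N`: finite radius sum and `(r_n)_{n≥1}` non-increasing. -/
def memN (A : ASC) : Prop :=
  rhoSum A < ⊤ ∧ ∀ n : ℕ, 1 ≤ n → (A (n + 1)).2 ≤ (A n).2

/-- Membership in `N(M,R)`. -/
def memNMR (M R : ℝ≥0∞) (A : ASC) : Prop := memN A ∧ muSup A ≤ M ∧ rhoSum A ≤ R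

/-- `A` is redundancy-free. -/
def RedundancyFree (A : ASC) : Prop :=
  ∀ k ∈ SIdx A,
    (ball (ctr A k) (rad A k) ∩ closedBall (ctr A 0) (rad A 0)).Nonempty ∧
    ∀ l ∈ SIdx A, l ≠ k → ¬ ball (ctr A k) (rad A k) ⊆ ball (ctr A l) (rad A l)

/-- `B` is partially above `A`. -/
def PartiallyAbove (B A : ASC) : Prop :=
  closedBall (ctr B 0) (rad B 0) ⊆ closedBall (ctr A 0) (rad A 0) ∧
  ∀ n : ℕ, 1 ≤ n →
    ball (ctr A n) (rad A n) ⊆ (closedBall (ctr B 0) (rad B 0))ᶜ ∨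
    ∃ m : ℕ, 1 ≤ m ∧ ball (ctr A n) (rad A n) ⊆ ball (ctr B m) (rad B m)

/-- The set `S̃` of all `B ∈ N(μ(A), ρ(A))` partially above `A`. -/
def Stilde (A : ASC) : Set ASC :=
  {B | memNMR (muSup A) (rhoSum A) B ∧ PartiallyAbove B A}

/-- `S₁`: the elements of `S̃` on which `δ₁` attains its supremum over `S̃`. -/
def S1 (A : ASC) : Set ASC :=
  {B ∈ Stilde A | delta1 B = sSup (delta1 '' Stilde A)}

/-- `S₂`: the elements of `S₁` on which `δ₂` attains its infimum over `S₁`. -/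
def S2 (A : ASC) : Set ASC :=
  {B ∈ S1 A | delta2 B = sInf (delta2 '' S1 A)}

/-- The (classical) error set `E(A)`. -/
def errSet (A : ASC) : Set ℂ :=
  (⋃ m ∈ SIdx A, ⋃ n ∈ SIdx A, ⋃ (_ : m ≠ n),
    closedBall (ctr A m) (rad A m) ∩ closedBall (ctr A n) (rad A n)) ∪
  ⋃ n ∈ SIdx A, (ball (ctr A 0) (rad A 0))ᶜ ∩ closedBall (ctr A n) (rad A n)

/-- `V(C) = ⋃_{n∈I} U_n`. -/
def VC (I : Set ℕ) (U : ℕ → Set ℂ) : Set ℂ := ⋃ n ∈ I, U n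

/-- `F(C) = ⋃_{n∈I} K_n`. -/
def FC (I : Set ℕ) (K : ℕ → Set ℂ) : Set ℂ := ⋃ n ∈ I, K n

/-- The set `L_A(C)` for a controlling collection `C = ((K_n, U_n))_{n∈I}`. -/
def LSet (A : ASC) (I : Set ℕ) (K U : ℕ → Set ℂ) : Set ASC :=
  {B | memNMR (muSup A) (rhoSum A) B ∧
    (∀ n ∈ I, rhoLoc B (U n) ≤ rhoLoc A (U n)) ∧
    closedBall (ctr B 0) (rad B 0) = closedBall (ctr A 0) (rad A 0) ∧
    (∀ k ∈ SIdx A, closedBall (ctr A k) (rad A k) ∩ VC I U = ∅ →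
      ∃ l ∈ SIdx B, ball (ctr B l) (rad B l) = ball (ctr A k) (rad A k)) ∧
    (∀ n ∈ I, ∀ k ∈ SIdx A, (closedBall (ctr A k) (rad A k) ∩ U n).Nonempty →
      (∃ l ∈ SIdx B, ball (ctr B l) (rad B l) = ball (ctr A k) (rad A k)) ∨
      (∃ l ∈ HIdx B (K n), ball (ctr A k) (rad A k) ⊆ ball (ctr B l) (rad B l)))}

/-- `A` is annular: `a_0 = a_1` and `0 < r_1 < r_0`. -/
def Annular (A : ASC) : Prop := ctr A 0 = ctr A 1 ∧ 0 < rad A 1 ∧ rad A 1 < rad A 0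

/-- The annular radius sum `ρ_a(A) = ∑_{n≥2} r_n`. -/
def rhoAnn (A : ASC) : ℝ≥0∞ := ∑' n : ℕ, ((A (n + 2)).2 : ℝ≥0∞)

/-- The annular discrepancy `δ_a(A) = r_0 − r_1 − 2ρ_a(A)`. -/
def deltaAnn (A : ASC) : EReal :=
  ((rad A 0 - rad A 1 : ℝ) : EReal) - ((2 * rhoAnn A : ℝ≥0∞) : EReal)

/-- The family `Ã` of Lemma 6.4 / Theorem 6.6 (annular classicalisation). -/
def ATilde (A : ASC) : Set ASC :=
  {B | (∀ n : ℕ, 2 ≤ n → (B (n + 1)).2 ≤ (B n).2) ∧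
    rhoAnn B ≤ rhoAnn A ∧ muSup B ≤ muSup A ∧ PartiallyAbove B A ∧
    ctr B 0 = ctr A 0 ∧ ctr B 1 = ctr A 0 ∧
    rad A 1 ≤ rad B 1 ∧ rad B 1 ≤ rad B 0 ∧ rad B 0 ≤ rad A 0}


open scoped Classical

namespace FH
variable (A : ASC)
def a0 : ℂ := (A 0).1
def r0 : ℝ := rad A 0
def rho : ℝ := ∑' n, rad A (n+1)
def dA : ℝ := r0 A - rho A
def eps : ℝ := (2*(r0 A + 1))⁻¹
def Mb : ℝ := ‖a0 A‖ + r0 A + rho A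

lemma rad_nonneg (B : ASC) (n : ℕ) : 0 ≤ rad B n := (B n).2.coe_nonneg

lemma summable_of_delta1 (h : 0 < delta1 A) : Summable (fun n => rad A (n+1)) := by
  have hne : rhoSum A ≠ ⊤ := by
    intro he
    rw [delta1, he] at h
    simp [EReal.coe_ennreal_top] at h
  exact NNReal.summable_coe.mpr (ENNReal.tsum_coe_ne_top_iff_summable.mp hne)

lemma delta1_eq (h : Summable (fun n => rad A (n+1))) :
    delta1 A = ((r0 A - rho A : ℝ) : EReal) := by
  have hs : Summable (fun n => (A (n+1)).2) := by
    rw [← NNReal.summable_coe]; exact h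
  have h1 : rhoSum A = ((∑' n, (A (n+1)).2 : NNReal) : ℝ≥0∞) := (ENNReal.coe_tsum hs).symm
  rw [delta1, h1, EReal.coe_nnreal_eq_coe_real, NNReal.coe_tsum, ← EReal.coe_sub]
  rfl

lemma dA_pos (h : 0 < delta1 A) : 0 < dA A := by
  have hs := summable_of_delta1 A h
  rw [delta1_eq A hs] at h
  exact_mod_cast h

def alive (n : ℕ) : Prop :=
  0 < rad A n ∧ (ball (ctr A n) (rad A n) ∩ closedBall (a0 A) (r0 A)).Nonempty

def A0 : ASC := fun n => if n = 0 then A 0 else if alive A n then A n else (a0 A, 0)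

lemma A0_zero : A0 A 0 = A 0 := by simp [A0]

lemma A0_alive (n : ℕ) (hn : n ≠ 0) (ha : alive A n) : A0 A n = A n := by simp [A0, hn, ha]

lemma A0_dead (n : ℕ) (hn : n ≠ 0) (ha : ¬ alive A n) : A0 A n = (a0 A, 0) := by
  simp [A0, hn, ha]

lemma A0_rad_le (n : ℕ) : rad (A0 A) n ≤ rad A n := by
  show ((A0 A n).2 : ℝ) ≤ ((A n).2 : ℝ)
  rcases Nat.eq_zero_or_pos n with rfl | hn
  · rw [A0_zero]
  · by_cases ha : alive A n
    · rw [A0_alive A n hn.ne' ha]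
    · rw [A0_dead A n hn.ne' ha]
      simpa using rad_nonneg A n

variable (hsum : Summable (fun n => rad A (n+1)))

include hsum in
lemma summable_A0 : Summable (fun n => rad (A0 A) (n+1)) :=
  Summable.of_nonneg_of_le (fun n => rad_nonneg _ _) (fun n => A0_rad_le A (n+1)) hsum

include hsum in
lemma summable_tail (N : ℕ) (hN : 1 ≤ N) : Summable (fun j => rad (A0 A) (N + j)) := by
  have h2 : Summable ((fun n => rad (A0 A) (n+1)) ∘ (fun j => N - 1 + j)) :=
    (summable_A0 A hsum).comp_injective (fun a b hab => by omega)
  refine h2.congr fun j => ?_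
  simp only [Function.comp_apply]
  congr 1
  omega

def T (N : ℕ) : ℝ := ∑' j, rad (A0 A) (N + j)

omit hsum in
lemma T_nonneg (N : ℕ) : 0 ≤ T A N := tsum_nonneg fun j => rad_nonneg _ _

include hsum in
lemma T_succ (N : ℕ) (hN : 1 ≤ N) : T A N = rad (A0 A) N + T A (N+1) := by
  rw [T, Summable.tsum_eq_zero_add (summable_tail A hsum N hN)]
  simp only [Nat.add_zero, T]
  congr 1
  apply tsum_congr; intro j; congr 1; omega

include hsum in
lemma T_antitone {N N' : ℕ} (hN : 1 ≤ N) (h : N ≤ N') : T A N' ≤ T A N := by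
  induction N' with
  | zero => omega
  | succ K ih =>
    rcases Nat.lt_or_ge N (K+1) with hlt | hge
    · have hK : 1 ≤ K := by omega
      calc T A (K+1) ≤ T A K := by
            rw [T_succ A hsum K hK]
            have := rad_nonneg (A0 A) K
            linarith
        _ ≤ T A N := ih (by omega)
    · have : N = K + 1 := by omega
      subst this; rfl

include hsum in
lemma le_T (N : ℕ) (hN : 1 ≤ N) : rad (A0 A) N ≤ T A N := by
  rw [T_succ A hsum N hN]
  have := T_nonneg A (N+1)
  linarith

omit hsum in
lemma T_tendsto : Tendsto (fun N => T A (N+1)) atTop (nhds 0) := by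
  have h := tendsto_sum_nat_add (fun n => rad (A0 A) (n+1))
  refine h.congr fun N => ?_
  apply tsum_congr; intro j; congr 1; omega

include hsum in
lemma T_partial (N K : ℕ) (hN : 1 ≤ N) :
    ∑ j ∈ Finset.Ico N K, rad (A0 A) j ≤ T A N := by
  rw [Finset.sum_Ico_eq_sum_range]
  have hs := summable_tail A hsum N hN
  calc ∑ k ∈ Finset.range (K - N), rad (A0 A) (N + k)
      ≤ ∑' j, rad (A0 A) (N + j) := Summable.sum_le_tsum _ (fun i _ => rad_nonneg _ _) hs
    _ = T A N := rfl

def bnd (n : ℕ) : ℕ := sInf {N | 1 ≤ N ∧ T A N < rad A n}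

include hsum in
lemma bnd_spec (n : ℕ) (hr : 0 < rad A n) : 1 ≤ bnd A n ∧ T A (bnd A n) < rad A n := by
  have hne : {N | 1 ≤ N ∧ T A N < rad A n}.Nonempty := by
    have he : ∀ᶠ N in atTop, T A (N+1) < rad A n :=
      (T_tendsto A).eventually (gt_mem_nhds hr)
    obtain ⟨N, hN⟩ := he.exists
    exact ⟨N+1, by omega, hN⟩
  exact Nat.sInf_mem hne

/-- The admissible class. -/
def K : Set ASC :=
  {B | (∀ n, ‖(B n).1‖ ≤ Mb A) ∧
    (‖(B 0).1 - a0 A‖ + rad B 0 ≤ r0 A) ∧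
    (∀ N, dA A + ∑ n ∈ Finset.Icc 1 N, rad B n ≤ rad B 0) ∧
    (∀ N K', 1 ≤ N → ∑ j ∈ Finset.Ico N K', rad B j ≤ T A N) ∧
    (∀ n, 1 ≤ n → alive A n →
      (∃ m, 1 ≤ m ∧ m ≤ bnd A n ∧ ‖ctr A n - (B m).1‖ + rad A n ≤ rad B m) ∨
      rad A n + rad B 0 ≤ ‖ctr A n - (B 0).1‖)}

omit hsum in
lemma sum_Icc_one (f : ℕ → ℝ) (N : ℕ) :
    ∑ n ∈ Finset.Icc 1 N, f n = ∑ n ∈ Finset.range N, f (n+1) := by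
  rw [← Finset.Ico_add_one_right_eq_Icc, Finset.sum_Ico_eq_sum_range]
  simp [add_comm]

section memK
variable {A} {B : ASC} (hB : B ∈ K A)

include hB in
lemma K_rad0_le : rad B 0 ≤ r0 A := by
  have := hB.2.1
  have := norm_nonneg ((B 0).1 - a0 A)
  linarith

include hB in
lemma K_partial_le (N : ℕ) : dA A + ∑ n ∈ Finset.range N, rad B (n+1) ≤ rad B 0 := by
  rw [← sum_Icc_one]
  exact hB.2.2.1 N

include hB in
lemma K_summable : Summable (fun n => rad B (n+1)) := by
  apply summable_of_sum_range_le (fun n => rad_nonneg _ _) (c := rad B 0 - dA A)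
  intro N
  have := K_partial_le hB N
  linarith

include hB in
lemma K_tsum_le : ∑' n, rad B (n+1) ≤ rad B 0 - dA A := by
  apply Summable.tsum_le_of_sum_range_le (K_summable hB)
  intro N
  have := K_partial_le hB N
  linarith

include hB in
lemma K_rad_le (hd : 0 < dA A) (n : ℕ) : rad B n ≤ r0 A := by
  rcases Nat.eq_zero_or_pos n with rfl | hn
  · exact K_rad0_le hB
  · have h1 : rad B n ≤ ∑ m ∈ Finset.Icc 1 n, rad B m :=
      Finset.single_le_sum (fun i _ => rad_nonneg B i) (by simp [Finset.mem_Icc]; omega)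
    have h2 := hB.2.2.1 n
    have h3 := K_rad0_le hB
    linarith

end memK

lemma witness_bnd (hsum : Summable (fun n => rad A (n+1))) {B : ASC}
    (h4 : ∀ N K', 1 ≤ N → ∑ j ∈ Finset.Ico N K', rad B j ≤ T A N) {n m : ℕ} (hm : 1 ≤ m)
    (hr : 0 < rad A n) (hle : rad A n ≤ rad B m) : m ≤ bnd A n := by
  by_contra hcon
  push_neg at hcon
  obtain ⟨hb1, hb2⟩ := bnd_spec A hsum n hr
  have h1 : rad B m ≤ T A m := by
    have := h4 m (m+1) hm
    simpa using this
  have h2 : T A m ≤ T A (bnd A n) := T_antitone A hsum hb1 (by omega)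
  linarith

/-- continuity of the basic coordinate maps -/
lemma continuous_radB (n : ℕ) : Continuous (fun B : ASC => rad B n) :=
  NNReal.continuous_coe.comp ((continuous_apply n).snd)

lemma continuous_ctrB (n : ℕ) : Continuous (fun B : ASC => (B n).1) :=
  (continuous_apply n).fst

omit hsum in
lemma isClosed_K : IsClosed (K A) := by
  have h1 : IsClosed {B : ASC | ∀ n, ‖(B n).1‖ ≤ Mb A} := by
    rw [setOf_forall]
    exact isClosed_iInter fun n => isClosed_le (continuous_ctrB n).norm continuous_const
  have h2 : IsClosed {B : ASC | ‖(B 0).1 - a0 A‖ + rad B 0 ≤ r0 A} :=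
    isClosed_le (((continuous_ctrB 0).sub continuous_const).norm.add (continuous_radB 0))
      continuous_const
  have h3 : IsClosed {B : ASC | ∀ N, dA A + ∑ n ∈ Finset.Icc 1 N, rad B n ≤ rad B 0} := by
    rw [setOf_forall]
    refine isClosed_iInter fun N => isClosed_le ?_ (continuous_radB 0)
    exact continuous_const.add (continuous_finset_sum _ fun n _ => continuous_radB n)
  have h4 : IsClosed {B : ASC | ∀ N K', 1 ≤ N → ∑ j ∈ Finset.Ico N K', rad B j ≤ T A N} := by
    simp only [setOf_forall]
    exact isClosed_iInter fun N => isClosed_iInter fun K' => isClosed_iInter fun _ =>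
      isClosed_le (continuous_finset_sum _ fun n _ => continuous_radB n) continuous_const
  have h5 : IsClosed {B : ASC | ∀ n, 1 ≤ n → alive A n →
      (∃ m, 1 ≤ m ∧ m ≤ bnd A n ∧ ‖ctr A n - (B m).1‖ + rad A n ≤ rad B m) ∨
      rad A n + rad B 0 ≤ ‖ctr A n - (B 0).1‖} := by
    rw [setOf_forall]
    refine isClosed_iInter fun n => ?_
    by_cases hn : 1 ≤ n ∧ alive A n
    · have he : {B : ASC | 1 ≤ n → alive A n →
          (∃ m, 1 ≤ m ∧ m ≤ bnd A n ∧ ‖ctr A n - (B m).1‖ + rad A n ≤ rad B m) ∨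
          rad A n + rad B 0 ≤ ‖ctr A n - (B 0).1‖} =
          (⋃ m ∈ Finset.Icc 1 (bnd A n),
            {B : ASC | ‖ctr A n - (B m).1‖ + rad A n ≤ rad B m}) ∪
          {B : ASC | rad A n + rad B 0 ≤ ‖ctr A n - (B 0).1‖} := by
        ext B
        simp only [mem_setOf_eq, mem_union, mem_iUnion, Finset.mem_Icc, exists_prop]
        constructor
        · intro h
          rcases h hn.1 hn.2 with ⟨m, hm1, hm2, hm3⟩ | h2
          · exact Or.inl ⟨m, ⟨hm1, hm2⟩, hm3⟩
          · exact Or.inr h2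
        · rintro (⟨m, ⟨hm1, hm2⟩, hm3⟩ | h2) _ _
          · exact Or.inl ⟨m, hm1, hm2, hm3⟩
          · exact Or.inr h2
      rw [he]
      refine IsClosed.union ?_ ?_
      · apply Set.Finite.isClosed_biUnion (Finset.finite_toSet _)
        intro m _
        exact isClosed_le
          ((continuous_const.sub (continuous_ctrB m)).norm.add continuous_const)
          (continuous_radB m)
      · exact isClosed_le (continuous_const.add (continuous_radB 0))
          (continuous_const.sub (continuous_ctrB 0)).norm
    · have : {B : ASC | 1 ≤ n → alive A n →
          (∃ m, 1 ≤ m ∧ m ≤ bnd A n ∧ ‖ctr A n - (B m).1‖ + rad A n ≤ rad B m) ∨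
          rad A n + rad B 0 ≤ ‖ctr A n - (B 0).1‖} = univ := by
        ext B
        simp only [mem_setOf_eq, mem_univ, iff_true]
        intro h1 h2
        exact absurd ⟨h1, h2⟩ hn
      rw [this]; exact isClosed_univ
  have hK : K A = {B : ASC | ∀ n, ‖(B n).1‖ ≤ Mb A} ∩
      ({B : ASC | ‖(B 0).1 - a0 A‖ + rad B 0 ≤ r0 A} ∩
      ({B : ASC | ∀ N, dA A + ∑ n ∈ Finset.Icc 1 N, rad B n ≤ rad B 0} ∩
      ({B : ASC | ∀ N K', 1 ≤ N → ∑ j ∈ Finset.Ico N K', rad B j ≤ T A N} ∩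
      {B : ASC | ∀ n, 1 ≤ n → alive A n →
        (∃ m, 1 ≤ m ∧ m ≤ bnd A n ∧ ‖ctr A n - (B m).1‖ + rad A n ≤ rad B m) ∨
        rad A n + rad B 0 ≤ ‖ctr A n - (B 0).1‖}))) := rfl
  rw [hK]
  exact h1.inter (h2.inter (h3.inter (h4.inter h5)))

omit hsum in
lemma isCompact_K (hd : 0 < dA A) : IsCompact (K A) := by
  have hC : IsCompact (univ.pi fun _ : ℕ => (closedBall (0:ℂ) (Mb A)) ×ˢ (Icc (0:NNReal) (A 0).2)) :=
    isCompact_univ_pi fun n => (isCompact_closedBall _ _).prod isCompact_Icc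
  apply hC.of_isClosed_subset (isClosed_K A)
  intro B hB
  rw [Set.mem_pi]
  intro n _
  constructor
  · rw [mem_closedBall, dist_eq_norm, sub_zero]
    exact hB.1 n
  · rw [mem_Icc]
    refine ⟨zero_le, ?_⟩
    have := K_rad_le hB hd n
    rwa [r0, rad, rad, NNReal.coe_le_coe] at this

include hsum in
lemma rad_le_rho (n : ℕ) : rad A (n+1) ≤ rho A :=
  Summable.le_tsum hsum n (fun j _ => rad_nonneg _ _)

include hsum in
lemma A0_mem_K : A0 A ∈ K A := by
  have hrho : 0 ≤ rho A := tsum_nonneg fun n => rad_nonneg _ _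
  have hr0 : 0 ≤ r0 A := rad_nonneg A 0
  refine ⟨?_, ?_, ?_, ?_, ?_⟩
  · intro n
    rcases Nat.eq_zero_or_pos n with rfl | hn
    · rw [A0_zero]
      show ‖a0 A‖ ≤ Mb A
      rw [Mb]; linarith
    · by_cases ha : alive A n
      · rw [A0_alive A n hn.ne' ha]
        obtain ⟨z, hz1, hz2⟩ := ha.2
        rw [mem_ball, dist_comm, dist_eq_norm] at hz1
        rw [mem_closedBall, dist_eq_norm] at hz2
        have h1 : ‖(A n).1‖ ≤ ‖a0 A‖ + r0 A + rad A n := by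
          have := norm_sub_norm_le ((A n).1 - z) (0 - z)
          have h2 : ‖(A n).1‖ ≤ ‖(A n).1 - z‖ + ‖z‖ := by
            simpa using norm_add_le ((A n).1 - z) z
          have h3 : ‖z‖ ≤ ‖z - a0 A‖ + ‖a0 A‖ := by
            simpa using norm_add_le (z - a0 A) (a0 A)
          have h4 : ‖z - a0 A‖ ≤ r0 A := hz2
          change ‖ctr A n - z‖ < rad A n at hz1
          have : ‖(A n).1 - z‖ < rad A n := hz1
          linarith
        have h5 : rad A n ≤ rho A := by
          obtain ⟨m, rfl⟩ : ∃ m, n = m + 1 := ⟨n-1, by omega⟩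
          exact rad_le_rho A hsum m
        rw [Mb]; linarith
      · rw [A0_dead A n hn.ne' ha]
        show ‖a0 A‖ ≤ Mb A
        rw [Mb]; linarith
  · rw [A0_zero]
    show ‖(A 0).1 - a0 A‖ + rad A 0 ≤ r0 A
    simp [a0, r0]
  · intro N
    have h1 : ∑ n ∈ Finset.Icc 1 N, rad (A0 A) n ≤ ∑ n ∈ Finset.range N, rad A (n+1) := by
      rw [sum_Icc_one]
      exact Finset.sum_le_sum fun i _ => A0_rad_le A (i+1)
    have h2 : ∑ n ∈ Finset.range N, rad A (n+1) ≤ rho A :=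
      Summable.sum_le_tsum _ (fun i _ => rad_nonneg _ _) hsum
    have h3 : rad (A0 A) 0 = r0 A := by rw [r0]; show ((A0 A 0).2 : ℝ) = _; rw [A0_zero]; rfl
    rw [h3, dA]
    linarith
  · intro N K' hN
    exact T_partial A hsum N K' hN
  · intro n hn ha
    left
    refine ⟨n, hn, ?_, ?_⟩
    · by_contra hcon
      push_neg at hcon
      obtain ⟨hb1, hb2⟩ := bnd_spec A hsum n ha.1
      have h1 : rad (A0 A) n ≤ T A n := le_T A hsum n hn
      have h2 : T A n ≤ T A (bnd A n) := T_antitone A hsum hb1 (by omega)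
      have h3 : rad (A0 A) n = rad A n := by
        show ((A0 A n).2 : ℝ) = _; rw [A0_alive A n (by omega) ha]; rfl
      linarith
    · rw [A0_alive A n (by omega) ha]
      have : rad (A0 A) n = rad A n := by
        show ((A0 A n).2 : ℝ) = _; rw [A0_alive A n (by omega) ha]; rfl
      show ‖ctr A n - (A n).1‖ + rad A n ≤ rad (A0 A) n
      rw [this]
      simp [ctr]

def g (x : ℝ) : ℝ := x - eps A * x^2

def fObj (B : ASC) : ℝ := g A (rad B 0) - ∑' n, g A (rad B (n+1))

omit hsum in
lemma r0_nonneg : 0 ≤ r0 A := rad_nonneg A 0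

omit hsum in
lemma eps_pos : 0 < eps A := by
  have := r0_nonneg A
  rw [eps]; positivity

omit hsum in
lemma eps_mul_lt (x : ℝ) (hx : x ≤ r0 A) (hx2 : 0 ≤ x) : eps A * x < 1 := by
  have h0 := r0_nonneg A
  have h1 : eps A * x ≤ eps A * r0 A := by
    have := eps_pos A
    nlinarith
  have h2 : eps A * r0 A < 1 := by
    rw [eps]
    rw [inv_mul_lt_iff₀ (by linarith)]
    linarith
  linarith

omit hsum in
lemma g_nonneg {x : ℝ} (hx : 0 ≤ x) (hx2 : x ≤ r0 A) : 0 ≤ g A x := by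
  have := eps_mul_lt A x hx2 hx
  have : 0 ≤ x * (1 - eps A * x) := by nlinarith
  rw [g]; nlinarith

omit hsum in
lemma g_pos {x : ℝ} (hx : 0 < x) (hx2 : x ≤ r0 A) : 0 < g A x := by
  have := eps_mul_lt A x hx2 hx.le
  have : 0 < x * (1 - eps A * x) := by nlinarith
  rw [g]; nlinarith

omit hsum in
lemma g_le_self {x : ℝ} (hx : 0 ≤ x) : g A x ≤ x := by
  have := eps_pos A
  rw [g]; nlinarith

section fK
variable {A} {B : ASC} (hB : B ∈ K A) (hd : 0 < dA A)

include hB hd in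
lemma K_g_nonneg (n : ℕ) : 0 ≤ g A (rad B n) :=
  g_nonneg A (rad_nonneg B n) (K_rad_le hB hd n)

include hB hd in
lemma K_summable_g : Summable (fun n => g A (rad B (n+1))) :=
  Summable.of_nonneg_of_le (fun n => K_g_nonneg hB hd (n+1))
    (fun n => g_le_self A (rad_nonneg B (n+1))) (K_summable hB)

include hB hd in
lemma fObj_le_r0 : fObj A B ≤ r0 A := by
  have h1 : 0 ≤ ∑' n, g A (rad B (n+1)) := tsum_nonneg fun n => K_g_nonneg hB hd (n+1)
  have h2 : g A (rad B 0) ≤ rad B 0 := g_le_self A (rad_nonneg B 0)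
  have h3 := K_rad0_le hB
  simp only [fObj]; linarith

end fK

omit hsum in
lemma exists_max (hd : 0 < dA A) (hne : (K A).Nonempty) :
    ∃ B ∈ K A, ∀ C ∈ K A, fObj A C ≤ fObj A B := by
  set S := sSup (fObj A '' K A) with hS
  have hbdd : BddAbove (fObj A '' K A) := by
    refine ⟨r0 A, ?_⟩
    rintro x ⟨C, hC, rfl⟩
    exact fObj_le_r0 hC hd
  have hSne : (fObj A '' K A).Nonempty := hne.image _
  -- the approximating closed sets
  set D : ℕ → Set ASC := fun k => K A ∩
    {B | ∀ N, (S - 1/(k+1)) + ∑ n ∈ Finset.range N, g A (rad B (n+1)) ≤ g A (rad B 0)} with hD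
  have hDclosed : ∀ k, IsClosed (D k) := by
    intro k
    refine (isClosed_K A).inter ?_
    rw [setOf_forall]
    refine isClosed_iInter fun N => isClosed_le ?_ ?_
    · apply continuous_const.add
      apply continuous_finset_sum
      intro n _
      have : Continuous (fun x : ℝ => x - eps A * x^2) := by continuity
      exact this.comp (continuous_radB (n+1))
    · have : Continuous (fun x : ℝ => x - eps A * x^2) := by continuity
      exact this.comp (continuous_radB 0)
  have hmemD : ∀ (k : ℕ) (B : ASC), B ∈ K A → S - 1/(k+1) ≤ fObj A B → B ∈ D k := by
    intro k B hB hf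
    refine ⟨hB, fun N => ?_⟩
    have h1 : ∑ n ∈ Finset.range N, g A (rad B (n+1)) ≤ ∑' n, g A (rad B (n+1)) :=
      Summable.sum_le_tsum _ (fun n _ => K_g_nonneg hB hd (n+1)) (K_summable_g hB hd)
    simp only [fObj] at hf
    linarith
  have hDne : ∀ k, (D k).Nonempty := by
    intro k
    have hlt : S - 1/(k+1) < S := by
      have : (0:ℝ) < 1/(k+1) := by positivity
      linarith
    obtain ⟨x, ⟨B, hB, rfl⟩, hx⟩ := exists_lt_of_lt_csSup hSne hlt
    exact ⟨B, hmemD k B hB hx.le⟩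
  have hDmono : ∀ {k l}, k ≤ l → D l ⊆ D k := by
    intro k l hkl B hB
    refine ⟨hB.1, fun N => ?_⟩
    have h1 := hB.2 N
    have h2 : (1:ℝ)/(l+1) ≤ 1/(k+1) := by
      apply one_div_le_one_div_of_le (by positivity)
      have : (k:ℝ) ≤ (l:ℝ) := by exact_mod_cast hkl
      linarith
    linarith
  have hDcompact : ∀ k, IsCompact (D k) :=
    fun k => (isCompact_K A hd).of_isClosed_subset (hDclosed k) inter_subset_left
  have hInter : (⋂ k, D k).Nonempty := by
    apply IsCompact.nonempty_iInter_of_directed_nonempty_isCompact_isClosed D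
      ?_ hDne hDcompact hDclosed
    intro k l
    exact ⟨max k l, hDmono (le_max_left _ _), hDmono (le_max_right _ _)⟩
  obtain ⟨B, hB⟩ := hInter
  rw [mem_iInter] at hB
  have hBK : B ∈ K A := (hB 0).1
  refine ⟨B, hBK, fun C hC => ?_⟩
  have hfB : S ≤ fObj A B := by
    by_contra hcon
    push_neg at hcon
    obtain ⟨k, hk⟩ := exists_nat_one_div_lt (show (0:ℝ) < S - fObj A B by linarith)
    have h2 := (hB k).2
    have h3 : S - 1/(k+1) ≤ fObj A B := by
      have hsg := K_summable_g hBK hd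
      have h4 : ∑' n, g A (rad B (n+1)) ≤ g A (rad B 0) - (S - 1/(k+1)) :=
        Summable.tsum_le_of_sum_range_le hsg (fun N => by have := h2 N; linarith)
      simp only [fObj]
      linarith
    linarith
  have h5 : fObj A C ≤ S := le_csSup hbdd ⟨C, hC, rfl⟩
  linarith
omit hsum in
lemma tsum_diff (φ ψ : ℕ → ℝ) (hφ : Summable φ) (hψ : Summable ψ) (s : Finset ℕ)
    (h : ∀ n, n ∉ s → φ n = ψ n) :
    ∑' n, φ n - ∑' n, ψ n = ∑ n ∈ s, φ n - ∑ n ∈ s, ψ n := by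
  have h1 := Summable.sum_add_tsum_compl (s := s) hφ
  have h2 := Summable.sum_add_tsum_compl (s := s) hψ
  have h3 : ∑' (x : ↑(↑s : Set ℕ)ᶜ), φ x = ∑' (x : ↑(↑s : Set ℕ)ᶜ), ψ x :=
    tsum_congr fun x => h x.1 (fun hmem => x.2 (Finset.mem_coe.mpr hmem))
  linarith

omit hsum in
lemma merge_center (p q : ℂ) (u v : ℝ) (hu : 0 ≤ u) (hv : 0 ≤ v) (hpq : ‖q - p‖ ≤ u + v) :
    ∃ c : ℂ, ‖c - p‖ ≤ v ∧ ‖c - q‖ ≤ u ∧ ‖c‖ ≤ max ‖p‖ ‖q‖ := by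
  set d := ‖q - p‖ with hdd
  by_cases hd0 : d = 0
  · have hq : q = p := by
      have : q - p = 0 := by rwa [← norm_eq_zero]
      linear_combination this
    exact ⟨p, by simp [hv], by simp [hq, hu], by simp⟩
  · have hdpos : 0 < d := lt_of_le_of_ne (norm_nonneg _) (Ne.symm hd0)
    set t := min v d / d with htdef
    have ht0 : 0 ≤ t := by positivity
    have ht1 : t ≤ 1 := by
      rw [htdef, div_le_one hdpos]
      exact min_le_right _ _
    have htd : t * d = min v d := div_mul_cancel₀ _ hd0
    refine ⟨p + (t:ℂ) * (q - p), ?_, ?_, ?_⟩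
    · have : p + (t:ℂ) * (q - p) - p = (t:ℂ) * (q - p) := by ring
      rw [this, norm_mul, Complex.norm_real, Real.norm_eq_abs, abs_of_nonneg ht0, ← hdd, htd]
      exact min_le_left _ _
    · have : p + (t:ℂ) * (q - p) - q = ((t - 1 : ℝ):ℂ) * (q - p) := by
        push_cast; ring
      rw [this, norm_mul, Complex.norm_real, Real.norm_eq_abs, abs_of_nonpos (by linarith), ← hdd]
      have : -(t - 1) * d = d - min v d := by
        have : (1 - t) * d = d - t * d := by ring
        rw [htd] at this
        linarith [this]
      rw [this]
      rcases le_total v d with hvd | hvd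
      · rw [min_eq_left hvd]; linarith
      · rw [min_eq_right hvd]; linarith
    · have : p + (t:ℂ) * (q - p) = ((1 - t : ℝ):ℂ) * p + (t:ℂ) * q := by
        push_cast; ring
      rw [this]
      calc ‖((1 - t : ℝ):ℂ) * p + (t:ℂ) * q‖ ≤ ‖((1 - t : ℝ):ℂ) * p‖ + ‖(t:ℂ) * q‖ :=
            norm_add_le _ _
        _ = (1 - t) * ‖p‖ + t * ‖q‖ := by
            rw [norm_mul, norm_mul, Complex.norm_real, Complex.norm_real, Real.norm_eq_abs,
              Real.norm_eq_abs, abs_of_nonneg (by linarith), abs_of_nonneg ht0]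
        _ ≤ (1 - t) * max ‖p‖ ‖q‖ + t * max ‖p‖ ‖q‖ := by
            have h1 : ‖p‖ ≤ max ‖p‖ ‖q‖ := le_max_left _ _
            have h2 : ‖q‖ ≤ max ‖p‖ ‖q‖ := le_max_right _ _
            have h3 : 0 ≤ 1 - t := by linarith
            nlinarith
        _ = max ‖p‖ ‖q‖ := by ring

omit hsum in
lemma shrink_center (b0 p : ℂ) (s0 u : ℝ) (hu : 0 ≤ u) (hus : u < s0)
    (hd : s0 ≤ ‖b0 - p‖ + u) :
    ∃ b0' : ℂ, ‖b0' - b0‖ ≤ u ∧ s0 ≤ ‖b0' - p‖ := by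
  set d := ‖b0 - p‖ with hdd
  have hdpos : 0 < d := by
    rcases lt_or_ge 0 d with h | h
    · exact h
    · have : d = 0 := le_antisymm h (norm_nonneg _)
      linarith
  set t := max (s0 - d) 0 / d with htdef
  have ht0 : 0 ≤ t := by positivity
  have htd : t * d = max (s0 - d) 0 := div_mul_cancel₀ _ hdpos.ne'
  refine ⟨b0 + (t:ℂ) * (b0 - p), ?_, ?_⟩
  · have : b0 + (t:ℂ) * (b0 - p) - b0 = (t:ℂ) * (b0 - p) := by ring
    rw [this, norm_mul, Complex.norm_real, Real.norm_eq_abs, abs_of_nonneg ht0, ← hdd, htd]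
    rcases le_total (s0 - d) 0 with h | h
    · rw [max_eq_right h]; exact hu
    · rw [max_eq_left h]; linarith
  · have : b0 + (t:ℂ) * (b0 - p) - p = ((1 + t : ℝ):ℂ) * (b0 - p) := by
      push_cast; ring
    rw [this, norm_mul, Complex.norm_real, Real.norm_eq_abs, abs_of_nonneg (by linarith), ← hdd]
    have : (1 + t) * d = d + t * d := by ring
    rw [this, htd]
    rcases le_total (s0 - d) 0 with h | h
    · rw [max_eq_right h]; linarith
    · rw [max_eq_left h]; linarith

-- sum over a window containing both indices is preserved by the merge modification
omit hsum in
lemma sum_merge_eq {B B' : ASC} {k l : ℕ} (hkl : k ≠ l)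
    (hk' : rad B' k = rad B k + rad B l) (hl' : rad B' l = 0)
    (hother : ∀ m, m ≠ k → m ≠ l → rad B' m = rad B m)
    (P : Finset ℕ) (hkP : k ∈ P) (hlP : l ∈ P) :
    ∑ m ∈ P, rad B' m = ∑ m ∈ P, rad B m := by
  have hP : P = insert k (insert l (P \ {k, l})) := by
    ext m
    simp only [Finset.mem_insert, Finset.mem_sdiff, Finset.mem_singleton]
    constructor
    · intro hm
      by_cases h1 : m = k
      · exact Or.inl h1
      · by_cases h2 : m = l
        · exact Or.inr (Or.inl h2)
        · exact Or.inr (Or.inr ⟨hm, by simp [h1, h2]⟩)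
    · rintro (rfl | rfl | ⟨hm, _⟩)
      · exact hkP
      · exact hlP
      · exact hm
  have hknotin : k ∉ insert l (P \ {k, l}) := by
    simp only [Finset.mem_insert, Finset.mem_sdiff, Finset.mem_singleton]
    rintro (h | ⟨_, h⟩)
    · exact hkl h
    · simp at h
  have hlnotin : l ∉ P \ {k, l} := by
    simp
  rw [hP, Finset.sum_insert hknotin, Finset.sum_insert hlnotin,
    Finset.sum_insert hknotin, Finset.sum_insert hlnotin]
  have heq : ∑ m ∈ P \ {k, l}, rad B' m = ∑ m ∈ P \ {k, l}, rad B m := by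
    apply Finset.sum_congr rfl
    intro m hm
    simp only [Finset.mem_sdiff, Finset.mem_insert, Finset.mem_singleton] at hm
    push_neg at hm
    exact hother m hm.2.1 hm.2.2
  rw [heq, hk', hl']
  ring

include hsum in
lemma merge_move (hd : 0 < dA A) {B : ASC} (hB : B ∈ K A) {k l : ℕ}
    (hk : 1 ≤ k) (hkl : k < l)
    (hu : 0 < rad B k) (hv : 0 < rad B l)
    (hmeet : ‖(B l).1 - (B k).1‖ ≤ rad B k + rad B l) :
    ∃ B' ∈ K A, fObj A B < fObj A B' := by
  obtain ⟨c, hc1, hc2, hc3⟩ := merge_center (B k).1 (B l).1 (rad B k) (rad B l)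
    hu.le hv.le hmeet
  set u := rad B k with hudef
  set v := rad B l with hvdef
  set B' : ASC := fun m => if m = k then (c, (B k).2 + (B l).2)
    else if m = l then ((B l).1, 0) else B m with hB'def
  have hl1 : 1 ≤ l := by omega
  have hne : k ≠ l := by omega
  have hBk : B' k = (c, (B k).2 + (B l).2) := by simp [hB'def]
  have hBl : B' l = ((B l).1, 0) := by simp [hB'def, Ne.symm hne]
  have hBo : ∀ m, m ≠ k → m ≠ l → B' m = B m := by
    intro m h1 h2; simp [hB'def, h1, h2]
  have hrk : rad B' k = u + v := by
    show ((B' k).2 : ℝ) = u + v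
    rw [hBk]; push_cast; rfl
  have hrl : rad B' l = 0 := by
    show ((B' l).2 : ℝ) = 0
    rw [hBl]
    simp
  have hro : ∀ m, m ≠ k → m ≠ l → rad B' m = rad B m := by
    intro m h1 h2
    show ((B' m).2 : ℝ) = ((B m).2 : ℝ)
    rw [hBo m h1 h2]
  have hB'0 : B' 0 = B 0 := hBo 0 (by omega) (by omega)
  have hr0' : rad B' 0 = rad B 0 := by
    show ((B' 0).2 : ℝ) = ((B 0).2 : ℝ)
    rw [hB'0]
  have hc1' : ‖(B k).1 - c‖ ≤ v := by rwa [norm_sub_rev] at hc1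
  have hc2' : ‖(B l).1 - c‖ ≤ u := by rwa [norm_sub_rev] at hc2
  have h4' : ∀ N K', 1 ≤ N → ∑ j ∈ Finset.Ico N K', rad B' j ≤ T A N := by
    intro N K' hN
    rcases le_or_gt N k with hNk | hNk
    · set K'' := max K' (l+1) with hK''
      have hsub : Finset.Ico N K' ⊆ Finset.Ico N K'' :=
        Finset.Ico_subset_Ico le_rfl (le_max_left _ _)
      have h1 : ∑ j ∈ Finset.Ico N K', rad B' j ≤ ∑ j ∈ Finset.Ico N K'', rad B' j :=
        Finset.sum_le_sum_of_subset_of_nonneg hsub (fun i _ _ => rad_nonneg _ _)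
      have hkP : k ∈ Finset.Ico N K'' := by
        simp only [Finset.mem_Ico]
        constructor
        · omega
        · have := le_max_right K' (l+1); omega
      have hlP : l ∈ Finset.Ico N K'' := by
        simp only [Finset.mem_Ico]
        constructor
        · omega
        · have := le_max_right K' (l+1); omega
      have h2 := sum_merge_eq hne hrk hrl hro (Finset.Ico N K'') hkP hlP
      have h3 := hB.2.2.2.1 N K'' hN
      linarith
    · have h1 : ∑ j ∈ Finset.Ico N K', rad B' j ≤ ∑ j ∈ Finset.Ico N K', rad B j := by
        apply Finset.sum_le_sum
        intro i hi
        simp only [Finset.mem_Ico] at hi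
        by_cases h2 : i = l
        · subst h2; rw [hrl]; exact rad_nonneg _ _
        · rw [hro i (by omega) h2]
      have h3 := hB.2.2.2.1 N K' hN
      linarith
  have h3' : ∀ N, dA A + ∑ n ∈ Finset.Icc 1 N, rad B' n ≤ rad B' 0 := by
    intro N
    set N' := max N l with hN'
    have hsub : Finset.Icc 1 N ⊆ Finset.Icc 1 N' :=
      Finset.Icc_subset_Icc le_rfl (le_max_left _ _)
    have h1 : ∑ n ∈ Finset.Icc 1 N, rad B' n ≤ ∑ n ∈ Finset.Icc 1 N', rad B' n :=
      Finset.sum_le_sum_of_subset_of_nonneg hsub (fun i _ _ => rad_nonneg _ _)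
    have hkP : k ∈ Finset.Icc 1 N' := by
      simp only [Finset.mem_Icc]
      have := le_max_right N l; omega
    have hlP : l ∈ Finset.Icc 1 N' := by
      simp only [Finset.mem_Icc]
      have := le_max_right N l; omega
    have h2 := sum_merge_eq hne hrk hrl hro (Finset.Icc 1 N') hkP hlP
    have h3 := hB.2.2.1 N'
    rw [hr0']
    linarith
  have hmem : B' ∈ K A := by
    refine ⟨?_, ?_, h3', h4', ?_⟩
    · intro m
      by_cases h1 : m = k
      · rw [h1, hBk]
        exact le_trans hc3 (max_le (hB.1 k) (hB.1 l))
      · by_cases h2 : m = l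
        · rw [h2, hBl]
          exact hB.1 l
        · rw [hBo m h1 h2]
          exact hB.1 m
    · show ‖(B' 0).1 - a0 A‖ + ((B' 0).2 : ℝ) ≤ r0 A
      rw [hB'0]
      exact hB.2.1
    · intro n hn ha
      rcases hB.2.2.2.2 n hn ha with ⟨m, hm1, hm2, hm3⟩ | h2
      · left
        by_cases hmk : m = k
        · rw [hmk] at hm3
          refine ⟨k, hk, ?_, ?_⟩
          · apply witness_bnd A hsum h4' hk ha.1
            rw [hrk]
            have := norm_nonneg (ctr A n - (B k).1)
            linarith
          · rw [hBk, hrk]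
            show ‖ctr A n - c‖ + rad A n ≤ u + v
            have h5 : ‖ctr A n - c‖ ≤ ‖ctr A n - (B k).1‖ + ‖(B k).1 - c‖ := by
              have := norm_add_le (ctr A n - (B k).1) ((B k).1 - c)
              simpa using this
            linarith
        · by_cases hml : m = l
          · rw [hml] at hm3
            refine ⟨k, hk, ?_, ?_⟩
            · apply witness_bnd A hsum h4' hk ha.1
              rw [hrk]
              have := norm_nonneg (ctr A n - (B l).1)
              linarith
            · rw [hBk, hrk]
              show ‖ctr A n - c‖ + rad A n ≤ u + v
              have h5 : ‖ctr A n - c‖ ≤ ‖ctr A n - (B l).1‖ + ‖(B l).1 - c‖ := by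
                have := norm_add_le (ctr A n - (B l).1) ((B l).1 - c)
                simpa using this
              linarith
          · refine ⟨m, hm1, hm2, ?_⟩
            rw [hBo m hmk hml, hro m hmk hml]
            exact hm3
      · right
        show rad A n + ((B' 0).2 : ℝ) ≤ ‖ctr A n - (B' 0).1‖
        rw [hB'0]
        exact h2
  refine ⟨B', hmem, ?_⟩
  have hsB := K_summable_g hB hd
  have hsB' := K_summable_g hmem hd
  obtain ⟨k0, rfl⟩ : ∃ k0, k = k0 + 1 := ⟨k-1, by omega⟩
  obtain ⟨l0, rfl⟩ : ∃ l0, l = l0 + 1 := ⟨l-1, by omega⟩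
  have hk0l0 : k0 ≠ l0 := by omega
  have hdiff := tsum_diff (fun n => g A (rad B' (n+1))) (fun n => g A (rad B (n+1)))
    hsB' hsB {k0, l0} ?_
  · rw [Finset.sum_pair hk0l0, Finset.sum_pair hk0l0] at hdiff
    simp only [hrk, hrl] at hdiff
    have hg0 : g A 0 = 0 := by simp [g]
    have hguv : g A (u + v) = g A u + g A v - 2 * eps A * u * v := by
      simp only [g]; ring
    have heps := eps_pos A
    have hpos : 0 < 2 * eps A * u * v := by positivity
    simp only [fObj, hr0']
    linarith
  · intro n hn
    simp only [Finset.mem_insert, Finset.mem_singleton] at hn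
    push_neg at hn
    show g A (rad B' (n+1)) = g A (rad B (n+1))
    rw [hro (n+1) (by omega) (by omega)]

omit hsum in
lemma sum_shrink_eq {B B' : ASC} {k : ℕ} (hk' : rad B' k = 0)
    (hother : ∀ m, m ≠ 0 → m ≠ k → rad B' m = rad B m)
    (P : Finset ℕ) (hkP : k ∈ P) (h0P : 0 ∉ P) :
    ∑ m ∈ P, rad B' m = ∑ m ∈ P, rad B m - rad B k := by
  have hP : P = insert k (P.erase k) := (Finset.insert_erase hkP).symm
  have hknotin : k ∉ P.erase k := Finset.notMem_erase _ _
  rw [hP, Finset.sum_insert hknotin, Finset.sum_insert hknotin, hk']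
  have heq : ∑ m ∈ P.erase k, rad B' m = ∑ m ∈ P.erase k, rad B m := by
    apply Finset.sum_congr rfl
    intro m hm
    have h1 : m ≠ k := Finset.ne_of_mem_erase hm
    have h2 : m ≠ 0 := by
      intro h; rw [h] at hm
      exact h0P (Finset.mem_of_mem_erase hm)
    exact hother m h2 h1
  rw [heq]
  ring

include hsum in
lemma shrink_move (hd : 0 < dA A) {B : ASC} (hB : B ∈ K A) {k : ℕ}
    (hk : 1 ≤ k) (hu : 0 < rad B k)
    (hout : rad B 0 ≤ ‖(B 0).1 - (B k).1‖ + rad B k) :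
    ∃ B' ∈ K A, fObj A B < fObj A B' := by
  set u := rad B k with hudef
  set s0 := rad B 0 with hs0def
  have hus0 : u + dA A ≤ s0 := by
    have h1 : u ≤ ∑ m ∈ Finset.Icc 1 k, rad B m :=
      Finset.single_le_sum (fun i _ => rad_nonneg B i) (by simp [Finset.mem_Icc]; omega)
    have h2 := hB.2.2.1 k
    linarith
  have huslt : u < s0 := by linarith
  obtain ⟨b0', hb1, hb2⟩ := shrink_center (B 0).1 (B k).1 s0 u hu.le huslt hout
  have hks0 : (B k).2 ≤ (B 0).2 := by
    rw [← NNReal.coe_le_coe]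
    show u ≤ s0
    linarith
  set B' : ASC := fun m => if m = 0 then (b0', (B 0).2 - (B k).2)
    else if m = k then ((B k).1, 0) else B m with hB'def
  have hB0' : B' 0 = (b0', (B 0).2 - (B k).2) := by simp [hB'def]
  have hBk : B' k = ((B k).1, 0) := by
    have : k ≠ 0 := by omega
    simp [hB'def, this]
  have hBo : ∀ m, m ≠ 0 → m ≠ k → B' m = B m := by
    intro m h1 h2; simp [hB'def, h1, h2]
  have hr0' : rad B' 0 = s0 - u := by
    show ((B' 0).2 : ℝ) = s0 - u
    rw [hB0']
    show (((B 0).2 - (B k).2 : NNReal) : ℝ) = s0 - u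
    rw [NNReal.coe_sub hks0]
    rfl
  have hrk : rad B' k = 0 := by
    show ((B' k).2 : ℝ) = 0
    rw [hBk]
    simp
  have hro : ∀ m, m ≠ 0 → m ≠ k → rad B' m = rad B m := by
    intro m h1 h2
    show ((B' m).2 : ℝ) = ((B m).2 : ℝ)
    rw [hBo m h1 h2]
  have hctr0 : (B' 0).1 = b0' := by rw [hB0']
  have h2' : ‖(B' 0).1 - a0 A‖ + rad B' 0 ≤ r0 A := by
    rw [hctr0, hr0']
    have h1 : ‖b0' - a0 A‖ ≤ ‖b0' - (B 0).1‖ + ‖(B 0).1 - a0 A‖ := by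
      have := norm_add_le (b0' - (B 0).1) ((B 0).1 - a0 A)
      simpa using this
    have h3 := hB.2.1
    linarith
  have h4' : ∀ N K', 1 ≤ N → ∑ j ∈ Finset.Ico N K', rad B' j ≤ T A N := by
    intro N K' hN
    have h1 : ∑ j ∈ Finset.Ico N K', rad B' j ≤ ∑ j ∈ Finset.Ico N K', rad B j := by
      apply Finset.sum_le_sum
      intro i hi
      simp only [Finset.mem_Ico] at hi
      by_cases h2 : i = k
      · rw [h2, hrk]; exact rad_nonneg _ _
      · rw [hro i (by omega) h2]
    have h3 := hB.2.2.2.1 N K' hN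
    linarith
  have h3' : ∀ N, dA A + ∑ n ∈ Finset.Icc 1 N, rad B' n ≤ rad B' 0 := by
    intro N
    set N' := max N k with hN'
    have hsub : Finset.Icc 1 N ⊆ Finset.Icc 1 N' :=
      Finset.Icc_subset_Icc le_rfl (le_max_left _ _)
    have h1 : ∑ n ∈ Finset.Icc 1 N, rad B' n ≤ ∑ n ∈ Finset.Icc 1 N', rad B' n :=
      Finset.sum_le_sum_of_subset_of_nonneg hsub (fun i _ _ => rad_nonneg _ _)
    have hkP : k ∈ Finset.Icc 1 N' := by
      simp only [Finset.mem_Icc]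
      have := le_max_right N k; omega
    have h0P : (0:ℕ) ∉ Finset.Icc 1 N' := by simp
    have h2 := sum_shrink_eq hrk hro (Finset.Icc 1 N') hkP h0P
    have h3 := hB.2.2.1 N'
    rw [hr0']
    linarith
  have hmem : B' ∈ K A := by
    refine ⟨?_, h2', h3', h4', ?_⟩
    · intro m
      by_cases h1 : m = 0
      · rw [h1, hB0']
        show ‖b0'‖ ≤ Mb A
        have h2 : ‖b0'‖ ≤ ‖b0' - a0 A‖ + ‖a0 A‖ := by
          have := norm_add_le (b0' - a0 A) (a0 A)
          simpa using this
        have h3 : 0 ≤ rad B' 0 := rad_nonneg _ _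
        have h4 : 0 ≤ rho A := tsum_nonneg fun n => rad_nonneg _ _
        rw [Mb]
        rw [hctr0] at h2'
        linarith
      · by_cases h2 : m = k
        · rw [h2, hBk]
          exact hB.1 k
        · rw [hBo m h1 h2]
          exact hB.1 m
    · intro n hn ha
      rcases hB.2.2.2.2 n hn ha with ⟨m, hm1, hm2, hm3⟩ | h2
      · by_cases hmk : m = k
        · right
          rw [hmk] at hm3
          rw [hctr0, hr0']
          have h5 : ‖b0' - (B k).1‖ ≤ ‖b0' - ctr A n‖ + ‖ctr A n - (B k).1‖ := by
            have := norm_add_le (b0' - ctr A n) (ctr A n - (B k).1)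
            simpa using this
          have h6 : ‖b0' - ctr A n‖ = ‖ctr A n - b0'‖ := norm_sub_rev _ _
          linarith [hb2, hm3]
        · left
          refine ⟨m, hm1, hm2, ?_⟩
          rw [hBo m (by omega) hmk, hro m (by omega) hmk]
          exact hm3
      · right
        rw [hctr0, hr0']
        have h5 : ‖ctr A n - (B 0).1‖ ≤ ‖ctr A n - b0'‖ + ‖b0' - (B 0).1‖ := by
          have := norm_add_le (ctr A n - b0') (b0' - (B 0).1)
          simpa using this
        linarith
  refine ⟨B', hmem, ?_⟩
  have hsB := K_summable_g hB hd
  have hsB' := K_summable_g hmem hd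
  obtain ⟨k0, hk0⟩ : ∃ k0, k = k0 + 1 := ⟨k-1, by omega⟩
  have hdiff := tsum_diff (fun n => g A (rad B' (n+1))) (fun n => g A (rad B (n+1)))
    hsB' hsB {k0} ?_
  · rw [Finset.sum_singleton, Finset.sum_singleton] at hdiff
    rw [← hk0] at hdiff
    rw [hrk] at hdiff
    have hg0 : g A 0 = 0 := by simp [g]
    have hgs : g A (s0 - u) - g A s0 + g A u = 2 * eps A * u * (s0 - u) := by
      simp only [g]; ring
    have heps := eps_pos A
    have hpos : 0 < 2 * eps A * u * (s0 - u) := by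
      have : 0 < s0 - u := by linarith
      positivity
    simp only [fObj, hr0']
    rw [← hudef] at hdiff
    rw [← hs0def]
    linarith
  · intro n hn
    simp only [Finset.mem_singleton] at hn
    show g A (rad B' (n+1)) = g A (rad B (n+1))
    rw [hro (n+1) (by omega) (by omega)]

omit hsum in
theorem main (h : 0 < delta1 A) :
    ∃ B : ASC, IsClassicalASC B ∧ Xset B ⊆ Xset A ∧ delta1 A ≤ delta1 B := by
  have hsum := summable_of_delta1 A h
  have hd := dA_pos A h
  obtain ⟨B, hBK, hmax⟩ := exists_max A hd ⟨A0 A, A0_mem_K A hsum⟩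
  have hrad0 : 0 < rad B 0 := by
    have h3 := hBK.2.2.1 0
    simp only [Finset.Icc_self, Finset.Icc_eq_empty_of_lt (by norm_num : (1:ℕ) > 0)] at h3
    have : ∑ n ∈ Finset.Icc 1 0, rad B n = 0 := by
      rw [Finset.Icc_eq_empty_of_lt (by norm_num)]
      exact Finset.sum_empty
    have h4 := hBK.2.2.1 0
    rw [this] at h4
    linarith
  refine ⟨B, ⟨?_, hrad0, ?_⟩, ?_, ?_⟩
  · -- rhoSum B < ⊤
    have hs : Summable (fun n => (B (n+1)).2) := by
      rw [← NNReal.summable_coe]; exact K_summable hBK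
    rw [lt_top_iff_ne_top, rhoSum]
    exact ENNReal.tsum_coe_ne_top_iff_summable.mpr hs
  · -- classical geometry
    intro k hk
    obtain ⟨hk1, hk2⟩ := hk
    constructor
    · -- closedBall ⊆ ball
      by_contra hc
      have hout : rad B 0 ≤ ‖(B 0).1 - (B k).1‖ + rad B k := by
        by_contra hc2
        push_neg at hc2
        apply hc
        intro z hz
        rw [mem_closedBall] at hz
        rw [mem_ball]
        have h5 := dist_triangle z (ctr B k) (ctr B 0)
        have h6 : dist (ctr B k) (ctr B 0) = ‖(B 0).1 - (B k).1‖ := by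
          rw [dist_eq_norm, norm_sub_rev]; rfl
        linarith
      obtain ⟨B', hB'K, hlt⟩ := shrink_move A hsum hd hBK hk1 hk2 hout
      exact absurd (hmax B' hB'K) (by linarith)
    · intro l hl hlk
      obtain ⟨hl1, hl2⟩ := hl
      by_contra hc
      rw [← Ne, ← Set.nonempty_iff_ne_empty] at hc
      obtain ⟨z, hz1, hz2⟩ := hc
      rw [mem_closedBall] at hz1 hz2
      have hmeet : ‖(B l).1 - (B k).1‖ ≤ rad B k + rad B l := by
        have h5 := dist_triangle ((B l).1) z ((B k).1)
        have h6 : dist ((B l).1) z = dist z (ctr B l) := dist_comm _ _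
        have h7 : dist z ((B k).1) = dist z (ctr B k) := rfl
        have h8 : ‖(B l).1 - (B k).1‖ = dist ((B l).1) ((B k).1) := (dist_eq_norm _ _).symm
        rw [h8]
        rw [h6, h7] at h5
        linarith
      rcases Nat.lt_or_ge k l with hkl | hkl
      · obtain ⟨B', hB'K, hlt⟩ := merge_move A hsum hd hBK hk1 hkl hk2 hl2 hmeet
        exact absurd (hmax B' hB'K) (by linarith)
      · have hlk' : l < k := by omega
        have hmeet' : ‖(B k).1 - (B l).1‖ ≤ rad B l + rad B k := by
          rw [norm_sub_rev]; linarith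
        obtain ⟨B', hB'K, hlt⟩ := merge_move A hsum hd hBK hl1 hlk' hl2 hk2 hmeet'
        exact absurd (hmax B' hB'K) (by linarith)
  · -- Xset B ⊆ Xset A
    intro z hz
    obtain ⟨hz1, hz2⟩ := hz
    rw [mem_closedBall] at hz1
    have hzc : dist z (ctr A 0) ≤ rad A 0 := by
      have h2 := hBK.2.1
      have h3 := dist_triangle z (ctr B 0) (ctr A 0)
      have h4 : dist (ctr B 0) (ctr A 0) = ‖(B 0).1 - a0 A‖ := by
        rw [dist_eq_norm]; rfl
      have h5 : r0 A = rad A 0 := rfl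
      linarith
    refine ⟨mem_closedBall.mpr hzc, ?_⟩
    intro hmem
    rw [mem_iUnion] at hmem
    obtain ⟨n, hn⟩ := hmem
    rw [mem_ball] at hn
    have hr : 0 < rad A (n+1) := lt_of_le_of_lt dist_nonneg hn
    have halive : alive A (n+1) := by
      refine ⟨hr, ⟨z, ?_, ?_⟩⟩
      · rw [mem_ball]; exact hn
      · rw [mem_closedBall]; exact hzc
    rcases hBK.2.2.2.2 (n+1) (by omega) halive with ⟨m, hm1, hm2, hm3⟩ | h2
    · apply hz2
      rw [mem_iUnion]
      obtain ⟨m0, rfl⟩ : ∃ m0, m = m0+1 := ⟨m-1, by omega⟩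
      refine ⟨m0, ?_⟩
      rw [mem_ball]
      have h5 := dist_triangle z (ctr A (n+1)) (ctr B (m0+1))
      have h6 : dist (ctr A (n+1)) (ctr B (m0+1)) = ‖ctr A (n+1) - (B (m0+1)).1‖ := by
        rw [dist_eq_norm]; rfl
      linarith
    · have h5 := dist_triangle (ctr A (n+1)) z ((B 0).1)
      have h6 : dist (ctr A (n+1)) z = dist z (ctr A (n+1)) := dist_comm _ _
      have h7 : ‖ctr A (n+1) - (B 0).1‖ = dist (ctr A (n+1)) ((B 0).1) := (dist_eq_norm _ _).symm
      rw [h7] at h2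
      have h8 : dist z ((B 0).1) = dist z (ctr B 0) := rfl
      rw [h8] at h5
      linarith
  · -- delta1
    have hsumB := K_summable hBK
    rw [delta1_eq A hsum, delta1_eq B hsumB, EReal.coe_le_coe_iff]
    have h1 := K_tsum_le hBK
    have h2 : rho B = ∑' n, rad B (n+1) := rfl
    have h3 : r0 B = rad B 0 := rfl
    rw [h2, h3]
    have h4 : r0 A - rho A = dA A := rfl
    rw [h4]
    linarith

end FH

/-- **Feinstein–Heath classicalisation theorem** (Theorem 4.1):
if `δ₁(A) > 0` then there is a classical abstract Swiss cheese `B` with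
`X_B ⊆ X_A` and `δ₁(B) ≥ δ₁(A)`. -/
theorem stmt0 (A : ASC) (h : 0 < delta1 A) :
    ∃ B : ASC, IsClassicalASC B ∧ Xset B ⊆ Xset A ∧ delta1 A ≤ delta1 B :=
  FH.main A h

end
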